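/- For each d ≥ 1 there exists p₀ such that for all primes p ≥ p₀ the following holds: for every positive integer s ≤ p and every choice of s affine bases A₁, ..., A_s of F_p^d, the sumset A₁ + ⋯ + A_s has cardinality at least (s/(8d))^d. -/

import Mathlib

open Finset MeasureTheory ENNReal Pointwise

lemma holder_sum {γ ι : Type*} [Fintype γ] (J : Finset ι) (hJ : J.card ≠ 0)
    (b : ι → γ → ℝ≥0∞) :
    ∑ c : γ, ∏ j ∈ J, (b j c) ^ ((J.card : ℝ)⁻¹) ≤
      ∏ j ∈ J, (∑ c : γ, b j c) ^ ((J.card : ℝ)⁻¹) := by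
  letI : MeasurableSpace γ := ⊤
  haveI : MeasurableSingletonClass γ := ⟨fun _ => trivial⟩
  have h := ENNReal.lintegral_prod_norm_pow_le (μ := (Measure.count : Measure γ)) J
    (f := fun j c => b j c) (fun i _ => Measurable.of_discrete.aemeasurable)
    (p := fun _ => (J.card : ℝ)⁻¹) ?_ (fun i _ => by positivity)
  · simpa [lintegral_count, tsum_fintype] using h
  · rw [Finset.sum_const, nsmul_eq_mul]
    field_simp

lemma lw_aux {ι γ : Type*} [Fintype ι] [DecidableEq ι] [Fintype γ] [DecidableEq γ] [Zero γ]
    (J : Finset ι) :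
    ∀ X : Finset (ι → γ), X.Nonempty → (∀ x ∈ X, ∀ y ∈ X, ∀ i, i ∉ J → x i = y i) →
      X.card ^ J.card ≤ X.card * ∏ j ∈ J, (X.image (fun x => Function.update x j 0)).card := by
  induction J using Finset.induction with
  | empty =>
      intro X hX hagree
      have hcard : X.card = 1 := by
        obtain ⟨x, hx⟩ := hX
        refine Finset.card_eq_one.2 ⟨x, ?_⟩
        ext y
        simp only [Finset.mem_singleton]
        constructor
        · intro hy; funext i; exact hagree y hy x hx i (by simp)
        · rintro rfl; exact hx
      simp [hcard]
  | @insert a J' ha IH =>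
      intro X hX hagree
      set n := J'.card with hn
      rcases Finset.eq_empty_or_nonempty J' with hJ' | hJ'
      · subst hJ'
        have h1 : (1:ℕ) ≤ (X.image (fun x => Function.update x a 0)).card :=
          Finset.card_pos.2 (hX.image _)
        simpa using Nat.mul_le_mul_left X.card h1
      have hn0 : n ≠ 0 := hJ'.card_pos.ne'
      -- fibers
      set Z : γ → Finset (ι → γ) := fun c => X.filter (fun x => x a = c) with hZ
      have hsum : X.card = ∑ c : γ, (Z c).card :=
        Finset.card_eq_sum_card_fiberwise (f := fun x : ι → γ => x a) (fun x _ => Finset.mem_univ _)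
      have hZle : ∀ c, (Z c).card ≤ (X.image (fun x => Function.update x a 0)).card := by
        intro c
        apply Finset.card_le_card_of_injOn (fun x => Function.update x a 0)
        · intro x hx
          exact Finset.mem_image_of_mem _ (Finset.mem_of_mem_filter x hx)
        · intro x hx y hy hxy
          have hxc : x a = c := (Finset.mem_filter.1 hx).2
          have hyc : y a = c := (Finset.mem_filter.1 hy).2
          funext i
          rcases eq_or_ne i a with rfl | hia
          · rw [hxc, hyc]
          · have := congrFun hxy i
            simpa [Function.update_apply, hia] using this
      have hdisj : ∀ j ∈ J', ∑ c : γ, ((Z c).image (fun x => Function.update x j 0)).card ≤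
          (X.image (fun x => Function.update x j 0)).card := by
        intro j hj
        have hja : j ≠ a := by rintro rfl; exact ha hj
        rw [← Finset.card_biUnion]
        · apply Finset.card_le_card
          intro y hy
          obtain ⟨c, _, hc⟩ := Finset.mem_biUnion.1 hy
          obtain ⟨x, hx, rfl⟩ := Finset.mem_image.1 hc
          exact Finset.mem_image_of_mem _ (Finset.mem_of_mem_filter x hx)
        · intro c1 _ c2 _ hne
          simp only [Finset.disjoint_left]
          intro y hy1 hy2
          obtain ⟨x1, hx1, rfl⟩ := Finset.mem_image.1 hy1
          obtain ⟨x2, hx2, he⟩ := Finset.mem_image.1 hy2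
          have h1 : x1 a = c1 := (Finset.mem_filter.1 hx1).2
          have h2 : x2 a = c2 := (Finset.mem_filter.1 hx2).2
          have := congrFun he a
          rw [Function.update_apply, Function.update_apply] at this
          simp only [if_neg (Ne.symm hja)] at this
          exact hne (by rw [← h1, ← this, h2])
      -- per-fiber bound in ℕ
      have hfib : ∀ c : γ, (Z c).card ^ n ≤
          (X.image (fun x => Function.update x a 0)).card *
            ∏ j ∈ J', ((Z c).image (fun x => Function.update x j 0)).card := by
        intro c
        rcases Finset.eq_empty_or_nonempty (Z c) with hZc | hZc
        · simp only [hZc, Finset.card_empty]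
          rw [Nat.zero_pow (Nat.pos_of_ne_zero hn0)]
          exact Nat.zero_le _
        · have hag : ∀ x ∈ Z c, ∀ y ∈ Z c, ∀ i, i ∉ J' → x i = y i := by
            intro x hx y hy i hi
            rcases eq_or_ne i a with rfl | hia
            · rw [(Finset.mem_filter.1 hx).2, (Finset.mem_filter.1 hy).2]
            · exact hagree x (Finset.mem_of_mem_filter x hx) y (Finset.mem_of_mem_filter y hy) i
                (by simp [Finset.mem_insert, hia, hi])
          calc (Z c).card ^ n ≤ (Z c).card * ∏ j ∈ J', ((Z c).image (fun x => Function.update x j 0)).card :=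
                IH (Z c) hZc hag
            _ ≤ _ := Nat.mul_le_mul_right _ (hZle c)
      set Pa : ℕ := (X.image (fun x => Function.update x a 0)).card with hPa
      set T : ℕ := Pa * ∏ j ∈ J', (X.image (fun x => Function.update x j 0)).card with hT
      have hnR : ((n:ℝ)) ≠ 0 := by exact_mod_cast hn0
      have key : (X.card : ℝ≥0∞) ≤ (T : ℝ≥0∞) ^ ((n:ℝ)⁻¹) := by
        calc (X.card : ℝ≥0∞) = ∑ c : γ, ((Z c).card : ℝ≥0∞) := by
              rw [hsum]; push_cast; rfl
          _ ≤ ∑ c : γ, ((Pa * ∏ j ∈ J', ((Z c).image (fun x => Function.update x j 0)).card : ℕ) : ℝ≥0∞) ^ ((n:ℝ)⁻¹) := by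
              apply Finset.sum_le_sum
              intro c _
              have h1 : ((Z c).card : ℝ≥0∞) ^ (n : ℕ) ≤
                  ((Pa * ∏ j ∈ J', ((Z c).image (fun x => Function.update x j 0)).card : ℕ) : ℝ≥0∞) := by
                exact_mod_cast hfib c
              calc ((Z c).card : ℝ≥0∞)
                  = (((Z c).card : ℝ≥0∞) ^ (n:ℕ)) ^ ((n:ℝ)⁻¹) := by
                    rw [← ENNReal.rpow_natCast _ n, ← ENNReal.rpow_mul,
                      mul_inv_cancel₀ hnR, ENNReal.rpow_one]
                _ ≤ _ := ENNReal.rpow_le_rpow h1 (by positivity)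
          _ = (Pa : ℝ≥0∞) ^ ((n:ℝ)⁻¹) *
                ∑ c : γ, ∏ j ∈ J', (((Z c).image (fun x => Function.update x j 0)).card : ℝ≥0∞) ^ ((n:ℝ)⁻¹) := by
              rw [Finset.mul_sum]
              apply Finset.sum_congr rfl
              intro c _
              push_cast
              rw [ENNReal.mul_rpow_of_nonneg _ _ (by positivity),
                ← ENNReal.prod_rpow_of_nonneg (by positivity)]
          _ ≤ (Pa : ℝ≥0∞) ^ ((n:ℝ)⁻¹) *
                ∏ j ∈ J', (∑ c : γ, (((Z c).image (fun x => Function.update x j 0)).card : ℝ≥0∞)) ^ ((n:ℝ)⁻¹) := by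
              exact mul_le_mul_right (holder_sum J' hn0 _) _
          _ ≤ (Pa : ℝ≥0∞) ^ ((n:ℝ)⁻¹) *
                ∏ j ∈ J', ((X.image (fun x => Function.update x j 0)).card : ℝ≥0∞) ^ ((n:ℝ)⁻¹) := by
              apply mul_le_mul_right
              apply Finset.prod_le_prod' ?_
              intro j hj
              apply ENNReal.rpow_le_rpow ?_ (by positivity)
              exact_mod_cast hdisj j hj
          _ = (T : ℝ≥0∞) ^ ((n:ℝ)⁻¹) := by
              rw [hT]
              push_cast
              rw [ENNReal.mul_rpow_of_nonneg _ _ (by positivity),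
                ← ENNReal.prod_rpow_of_nonneg (by positivity)]
      have keyn : (X.card : ℝ≥0∞) ^ (n:ℕ) ≤ (T : ℝ≥0∞) := by
        calc (X.card : ℝ≥0∞) ^ (n:ℕ) ≤ ((T : ℝ≥0∞) ^ ((n:ℝ)⁻¹)) ^ (n:ℕ) :=
              pow_le_pow_left' key n
          _ = (T : ℝ≥0∞) := by
              rw [← ENNReal.rpow_natCast _ n, ← ENNReal.rpow_mul,
                inv_mul_cancel₀ hnR, ENNReal.rpow_one]
      have hnat : X.card ^ n ≤ T := by exact_mod_cast keyn
      rw [Finset.card_insert_of_notMem ha, Finset.prod_insert ha, pow_succ]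
      calc X.card ^ n * X.card ≤ T * X.card := Nat.mul_le_mul_right _ hnat
        _ = X.card * (Pa * ∏ j ∈ J', (X.image (fun x => Function.update x j 0)).card) := by
              rw [hT]; ring

lemma zmod_succ_escape {p : ℕ} [NeZero p] (S : Finset (ZMod p)) (hS : S.Nonempty)
    (hcard : S.card < p) : ∃ c ∈ S, c + 1 ∉ S := by
  by_contra h
  push_neg at h
  have hstep : ∀ m : ℕ, ∀ c ∈ S, c + (m : ZMod p) ∈ S := by
    intro m
    induction m with
    | zero => intro c hc; simpa using hc
    | succ k ih =>
        intro c hc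
        have := h _ (ih c hc)
        push_cast
        rw [← add_assoc]
        exact this
  obtain ⟨c₀, hc₀⟩ := hS
  have : ∀ x : ZMod p, x ∈ S := by
    intro x
    have := hstep (x - c₀).val c₀ hc₀
    rwa [ZMod.natCast_zmod_val (x - c₀), add_sub_cancel] at this
  have : S = Finset.univ := Finset.eq_univ_iff_forall.2 this
  rw [this, Finset.card_univ, ZMod.card] at hcard
  omega


lemma proj_card_le {p d : ℕ} [NeZero p] (X : Finset (Fin d → ZMod p)) (j : Fin d) :
    p * (X.image (fun x => Function.update x j 0)).card ≤
      X.card + p * ((X.image (fun x => x + Pi.single j 1)) \ X).card := by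
  classical
  set π : (Fin d → ZMod p) → (Fin d → ZMod p) := fun x => Function.update x j 0 with hπ
  set Y : Finset (Fin d → ZMod p) := X.image π with hY
  set fib : (Fin d → ZMod p) → Finset (Fin d → ZMod p) :=
    fun z => X.filter (fun x => π x = z) with hfib
  set B : Finset (Fin d → ZMod p) := (X.image (fun x => x + Pi.single j 1)) \ X with hB
  have hsum : X.card = ∑ z ∈ Y, (fib z).card :=
    Finset.card_eq_sum_card_fiberwise (fun x hx => Finset.mem_image_of_mem _ hx)
  have hfible : ∀ z, (fib z).card ≤ p := by
    intro z
    have : (fib z).card = ((fib z).image (fun x => x j)).card := by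
      rw [Finset.card_image_of_injOn]
      intro x hx y hy hxy
      have hx' : π x = z := (Finset.mem_filter.1 hx).2
      have hy' : π y = z := (Finset.mem_filter.1 hy).2
      funext i
      rcases eq_or_ne i j with rfl | hij
      · exact hxy
      · have := congrFun (hx'.trans hy'.symm) i
        simpa [hπ, Function.update_apply, hij] using this
    rw [this]
    calc ((fib z).image (fun x => x j)).card ≤ (Finset.univ : Finset (ZMod p)).card :=
          Finset.card_le_card (Finset.subset_univ _)
      _ = p := by rw [Finset.card_univ, ZMod.card]
  set Ypart : Finset (Fin d → ZMod p) := Y.filter (fun z => (fib z).card < p) with hYp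
  set Yfull : Finset (Fin d → ZMod p) := Y.filter (fun z => ¬ (fib z).card < p) with hYf
  have hYsplit : Ypart.card + Yfull.card = Y.card := Finset.card_filter_add_card_filter_not _
  -- full fibers
  have hfull : p * Yfull.card ≤ X.card := by
    calc p * Yfull.card = ∑ _z ∈ Yfull, p := by rw [Finset.sum_const, smul_eq_mul, mul_comm]
      _ ≤ ∑ z ∈ Yfull, (fib z).card :=
          Finset.sum_le_sum (fun z hz => Nat.le_of_not_lt (Finset.mem_filter.1 hz).2)
      _ ≤ ∑ z ∈ Y, (fib z).card :=
          Finset.sum_le_sum_of_subset (Finset.filter_subset _ _)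
      _ = X.card := hsum.symm
  -- partial fibers inject into boundary
  have hpart : Ypart.card ≤ B.card := by
    have hsub : Ypart ⊆ B.image π := by
      intro z hz
      have hzY : z ∈ Y := Finset.mem_of_mem_filter z hz
      have hzlt : (fib z).card < p := (Finset.mem_filter.1 hz).2
      obtain ⟨x₁, hx₁⟩ := Finset.mem_image.1 hzY
      have hfibne : (fib z).Nonempty := ⟨x₁, Finset.mem_filter.2 ⟨hx₁.1, hx₁.2⟩⟩
      set sec : Finset (ZMod p) := (fib z).image (fun x => x j) with hsec
      have hseccard : sec.card < p := lt_of_le_of_lt (Finset.card_image_le) hzlt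
      obtain ⟨c, hc, hc1⟩ := zmod_succ_escape sec (hfibne.image _) hseccard
      obtain ⟨x₀, hx₀, hx₀j⟩ := Finset.mem_image.1 hc
      have hx₀X : x₀ ∈ X := Finset.mem_of_mem_filter x₀ hx₀
      have hx₀z : π x₀ = z := (Finset.mem_filter.1 hx₀).2
      set b := x₀ + Pi.single j 1 with hb
      have hπb : π b = z := by
        rw [← hx₀z]
        funext i
        rcases eq_or_ne i j with rfl | hij
        · simp [hπ]
        · simp [hπ, hb, Function.update_apply, hij, Pi.single_eq_of_ne hij]
      have hbj : b j = c + 1 := by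
        rw [hb, ← hx₀j]
        simp
      have hbX : b ∉ X := by
        intro hbX
        exact hc1 (Finset.mem_image.2 ⟨b, Finset.mem_filter.2 ⟨hbX, hπb⟩, hbj⟩)
      have hbB : b ∈ B := Finset.mem_sdiff.2 ⟨Finset.mem_image_of_mem _ hx₀X, hbX⟩
      exact Finset.mem_image.2 ⟨b, hbB, hπb⟩
    calc Ypart.card ≤ (B.image π).card := Finset.card_le_card hsub
      _ ≤ B.card := Finset.card_image_le
  calc p * Y.card = p * Yfull.card + p * Ypart.card := by rw [← hYsplit]; ring
    _ ≤ X.card + p * B.card := Nat.add_le_add hfull (Nat.mul_le_mul_left p hpart)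

lemma exists_big_boundary {p d : ℕ} [NeZero p] (hd : 1 ≤ d)
    (X : Finset (Fin d → ZMod p)) (hX : X.Nonempty) (t : ℕ)
    (harith : (X.card + p * (t - 1)) ^ d < p ^ d * X.card ^ (d - 1)) :
    ∃ j : Fin d, t ≤ ((X.image (fun x => x + Pi.single j 1)) \ X).card := by
  by_contra hcon
  push_neg at hcon
  have hbd : ∀ j : Fin d, ((X.image (fun x => x + Pi.single j 1)) \ X).card ≤ t - 1 :=
    fun j => Nat.le_sub_one_of_lt (hcon j)
  have hlw := lw_aux (Finset.univ : Finset (Fin d)) X hX (by simp)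
  have hproj : ∀ j : Fin d, p * (X.image (fun x => Function.update x j 0)).card ≤
      X.card + p * (t - 1) := by
    intro j
    calc p * (X.image (fun x => Function.update x j 0)).card
        ≤ X.card + p * ((X.image (fun x => x + Pi.single j 1)) \ X).card := proj_card_le X j
      _ ≤ X.card + p * (t - 1) := Nat.add_le_add_left (Nat.mul_le_mul_left p (hbd j)) _
  have hchain : p ^ d * X.card ^ d ≤ X.card * (X.card + p * (t - 1)) ^ d := by
    calc p ^ d * X.card ^ d
        ≤ p ^ d * (X.card * ∏ j : Fin d, (X.image (fun x => Function.update x j 0)).card) := by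
          apply Nat.mul_le_mul_left
          simpa [Finset.card_univ] using hlw
      _ = X.card * ∏ j : Fin d, (p * (X.image (fun x => Function.update x j 0)).card) := by
          rw [Finset.prod_mul_distrib, Finset.prod_const, Finset.card_univ, Fintype.card_fin]
          ring
      _ ≤ X.card * ∏ _j : Fin d, (X.card + p * (t - 1)) :=
          Nat.mul_le_mul_left _ (Finset.prod_le_prod' (fun j _ => hproj j))
      _ = X.card * (X.card + p * (t - 1)) ^ d := by
          rw [Finset.prod_const, Finset.card_univ, Fintype.card_fin]
  have hfinal : X.card * (X.card + p * (t - 1)) ^ d < X.card * (p ^ d * X.card ^ (d - 1)) :=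
    Nat.mul_lt_mul_of_pos_left harith (Finset.card_pos.2 hX)
  have heq : X.card * (p ^ d * X.card ^ (d - 1)) = p ^ d * X.card ^ d := by
    have hd' : d - 1 + 1 = d := Nat.succ_pred_eq_of_pos hd
    calc X.card * (p ^ d * X.card ^ (d - 1)) = p ^ d * (X.card ^ (d - 1) * X.card) := by ring
      _ = p ^ d * X.card ^ d := by rw [← pow_succ, hd']
  omega

lemma affine_extract {p d : ℕ} [Fact p.Prime] (A : Finset (Fin d → ZMod p))
    (hcard : A.card = d + 1)
    (hai : AffineIndependent (ZMod p)
      (fun x : (A : Finset (Fin d → ZMod p)) => (x : Fin d → ZMod p))) :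
    ∃ (a₀ : Fin d → ZMod p) (v : Fin d → (Fin d → ZMod p)),
      a₀ ∈ A ∧ (∀ j, a₀ + v j ∈ A) ∧ LinearIndependent (ZMod p) v := by
  have e : Fin (d+1) ≃ {x // x ∈ A} := (A.equivFin.trans (finCongr hcard)).symm
  set P : Fin (d+1) → (Fin d → ZMod p) := fun i => (e i : Fin d → ZMod p) with hP
  have hPai : AffineIndependent (ZMod p) P := hai.comp_embedding e.toEmbedding
  have hPA : ∀ i, P i ∈ A := fun i => (e i).2
  have hli := (affineIndependent_iff_linearIndependent_vsub (ZMod p) P 0).1 hPai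
  set v : Fin d → (Fin d → ZMod p) := fun j => P j.succ - P 0 with hv
  have hvli : LinearIndependent (ZMod p) v := by
    have hinj : Function.Injective
        (fun j : Fin d => (⟨j.succ, Fin.succ_ne_zero j⟩ : {i : Fin (d+1) // i ≠ 0})) := by
      intro a b h
      have := congrArg Subtype.val h
      simpa [Fin.succ_inj] using this
    have h2 := hli.comp _ hinj
    have h3 : ((fun i : {i : Fin (d+1) // i ≠ 0} => P ↑i -ᵥ P 0) ∘
        (fun j : Fin d => (⟨j.succ, Fin.succ_ne_zero j⟩ : {i : Fin (d+1) // i ≠ 0}))) = v := by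
      funext j
      simp [hv, vsub_eq_sub]
    rwa [h3] at h2
  refine ⟨P 0, v, hPA 0, fun j => ?_, hvli⟩
  have : P 0 + v j = P j.succ := by rw [hv]; rw [add_comm, sub_add_cancel]
  rw [this]
  exact hPA j.succ

lemma grow {p d : ℕ} [Fact p.Prime] (hd : 1 ≤ d)
    (X A : Finset (Fin d → ZMod p)) (hX : X.Nonempty)
    (hcard : A.card = d + 1)
    (hai : AffineIndependent (ZMod p)
      (fun x : (A : Finset (Fin d → ZMod p)) => (x : Fin d → ZMod p)))
    (t : ℕ)
    (harith : (X.card + p * (t - 1)) ^ d < p ^ d * X.card ^ (d - 1)) :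
    X.card + t ≤ (X + A).card := by
  classical
  obtain ⟨a₀, v, ha₀, hav, hvli⟩ := affine_extract A hcard hai
  haveI : Nonempty (Fin d) := ⟨⟨0, hd⟩⟩
  have hfr : Fintype.card (Fin d) = Module.finrank (ZMod p) (Fin d → ZMod p) := by
    rw [Module.finrank_fintype_fun_eq_card]
  set b := basisOfLinearIndependentOfCardEqFinrank hvli hfr with hb
  set φ : (Fin d → ZMod p) ≃ₗ[ZMod p] (Fin d → ZMod p) := b.equivFun with hφ
  have hbv : ∀ j, b j = v j := by
    intro j
    rw [hb, coe_basisOfLinearIndependentOfCardEqFinrank]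
  have hφv : ∀ j, φ (v j) = Pi.single j 1 := by
    intro j
    funext i
    rw [hφ, ← hbv j, Module.Basis.equivFun_self, Pi.single_apply]
    by_cases h : i = j
    · subst h; simp
    · simp [h, Ne.symm h]
  set X' : Finset (Fin d → ZMod p) := X.image φ with hX'
  have hcX' : X'.card = X.card := Finset.card_image_of_injective _ φ.injective
  obtain ⟨j, hj⟩ := exists_big_boundary hd X' (hX.image _) t (by rwa [hcX'])
  set s : Finset (Fin d → ZMod p) := X.image (fun x => x + (a₀ + v j)) with hs
  set tt : Finset (Fin d → ZMod p) := X.image (fun x => x + a₀) with htt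
  have hsubW : s ∪ tt ⊆ X + A := by
    intro y hy
    rcases Finset.mem_union.1 hy with hy | hy
    · obtain ⟨x, hx, rfl⟩ := Finset.mem_image.1 hy
      exact Finset.add_mem_add hx (hav j)
    · obtain ⟨x, hx, rfl⟩ := Finset.mem_image.1 hy
      exact Finset.add_mem_add hx ha₀
  set g : (Fin d → ZMod p) → (Fin d → ZMod p) := fun y => φ y - φ a₀ with hg
  have hginj : Function.Injective g := by
    intro y z h
    have : φ y = φ z := by
      have := congrArg (fun w => w + φ a₀) h
      simpa [hg, sub_add_cancel] using this
    exact φ.injective this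
  have himg_s : s.image g = X'.image (fun x => x + Pi.single j 1) := by
    rw [hs, hX', Finset.image_image, Finset.image_image]
    apply Finset.image_congr
    intro x _
    simp only [Function.comp_apply, hg]
    rw [map_add, map_add, hφv j]
    abel
  have himg_t : tt.image g = X' := by
    rw [htt, hX', Finset.image_image]
    apply Finset.image_congr
    intro x _
    simp only [Function.comp_apply, hg]
    rw [map_add]
    abel
  have hsd : (s \ tt).card = ((X'.image (fun x => x + Pi.single j 1)) \ X').card := by
    rw [← himg_s, ← himg_t, ← Finset.image_sdiff _ _ hginj,
      Finset.card_image_of_injective _ hginj]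
  have hcard_t : tt.card = X.card := Finset.card_image_of_injective _ (add_left_injective a₀)
  calc X.card + t ≤ (s \ tt).card + tt.card := by
        rw [hsd, hcard_t]
        omega
    _ = (s ∪ tt).card := Finset.card_sdiff_add_card s tt
    _ ≤ (X + A).card := Finset.card_le_card hsubW

lemma poly_ineq : ∀ (d : ℕ) (x : ℝ), 0 ≤ x → (1+x)^d * (1 - d*x) ≤ 1 := by
  intro d
  induction d with
  | zero => intro x hx; simp
  | succ n ih =>
      intro x hx
      have h1 := ih x hx
      have h2 : (0:ℝ) ≤ (1+x)^n := by positivity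
      have h3 : (0:ℝ) ≤ (1+x)^n * ((n+1)*x^2) := by positivity
      have heq : (1+x)^(n+1) * (1 - (n+1:ℕ)*x)
          = (1+x)^n * (1 - n*x) - (1+x)^n * (((n:ℝ)+1)*x^2) := by
        push_cast
        ring
      push_cast at heq ⊢
      linarith [heq]

lemma key_ineq (d : ℕ) (hd : 1 ≤ d) (y : ℝ) (hy : 1 ≤ y) :
    (y + 1/(8*d))^d ≤ y^d + (3/4)*y^(d-1) := by
  have hd0 : (0:ℝ) < d := by exact_mod_cast hd
  have hy0 : (0:ℝ) < y := by linarith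
  set x : ℝ := 1/(8*(d:ℝ)*y) with hx
  have hx0 : 0 ≤ x := by positivity
  have hxy : y * (1+x) = y + 1/(8*d) := by
    rw [hx]; field_simp
  have hdx : (d:ℝ)*x = 1/(8*y) := by
    rw [hx]; field_simp
  have hpoly := poly_ineq d x hx0
  have key1' : (y + 1/(8*(d:ℝ)))^d * (8*y - 1) ≤ 8 * y * y^d := by
    have hmul : (0:ℝ) ≤ 8 * y * y^d := by positivity
    have h1 : (y + 1/(8*(d:ℝ)))^d = y^d * (1+x)^d := by
      rw [← hxy, mul_pow]
    rw [h1]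
    have h2 : y^d * (1+x)^d * (8*y - 1) = (8*y*y^d) * ((1+x)^d * (1 - (d:ℝ)*x)) := by
      rw [hdx]
      field_simp
    rw [h2]
    calc (8*y*y^d) * ((1+x)^d * (1 - (d:ℝ)*x)) ≤ (8*y*y^d) * 1 :=
          mul_le_mul_of_nonneg_left hpoly hmul
      _ = 8*y*y^d := mul_one _
  have hyd : y^d = y^(d-1) * y := by
    rw [← pow_succ, Nat.sub_add_cancel hd]
  have hC1 : (1:ℝ) ≤ y^(d-1) := one_le_pow₀ hy
  have hA0 : (0:ℝ) ≤ (y + 1/(8*(d:ℝ)))^d := by positivity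
  nlinarith [key1', hC1, hy, hA0, hyd]

lemma sum_finset_nonempty {M ι : Type*} [AddCommMonoid M] [DecidableEq M] (I : Finset ι)
    (F : ι → Finset M) (h : ∀ i, (F i).Nonempty) : (∑ i ∈ I, F i).Nonempty := by
  classical
  induction I using Finset.cons_induction with
  | empty => simp only [Finset.sum_empty]; exact Finset.zero_nonempty
  | cons a I ha ih => rw [Finset.sum_cons]; exact (h a).add ih

set_option maxHeartbeats 1000000 in
theorem sumset_of_affine_bases (d : ℕ) (hd : 1 ≤ d) :
    ∃ p₀ : ℕ, ∀ p : ℕ, p₀ ≤ p → p.Prime →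
      ∀ s : ℕ, 1 ≤ s → s ≤ p →
      ∀ A : Fin s → Finset (Fin d → ZMod p),
        (∀ i, (A i).card = d + 1 ∧
          AffineIndependent (ZMod p) (fun x : (A i : Finset (Fin d → ZMod p)) => (x : Fin d → ZMod p))) →
        ((s : ℝ) / (8 * d)) ^ d ≤ ((∑ i, A i).card : ℝ) := by
  classical
  refine ⟨2, fun p _hp hpp s hs hsp A hA => ?_⟩
  haveI : Fact p.Prime := ⟨hpp⟩
  set B : ℕ → Finset (Fin d → ZMod p) :=
    fun k => ∑ i ∈ Finset.univ.filter (fun i : Fin s => (i : ℕ) < k), A i with hB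
  have hAne : ∀ i, (A i).Nonempty := fun i => Finset.card_pos.1 (by rw [(hA i).1]; omega)
  have hBne : ∀ k, (B k).Nonempty := fun k => sum_finset_nonempty _ _ hAne
  have hd0 : (0:ℝ) < d := by exact_mod_cast hd
  have hd1 : (1:ℝ) ≤ d := by exact_mod_cast hd
  have hp0 : (0:ℝ) < p := by exact_mod_cast hpp.pos
  -- step identity
  have hstep : ∀ (k) (hks : k < s), B (k+1) = A ⟨k, hks⟩ + B k := by
    intro k hks
    simp only [hB]
    have hins : Finset.univ.filter (fun i : Fin s => (i : ℕ) < k + 1)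
        = insert ⟨k, hks⟩ (Finset.univ.filter (fun i : Fin s => (i : ℕ) < k)) := by
      ext i
      simp only [Finset.mem_filter, Finset.mem_univ, true_and, Finset.mem_insert, Fin.ext_iff]
      omega
    rw [hins, Finset.sum_insert (by simp)]
  -- main induction
  have main : ∀ k, 1 ≤ k → k ≤ s → ((k:ℝ)/(8*d))^d ≤ ((B k).card : ℝ) := by
    intro k hk1
    induction k, hk1 using Nat.le_induction with
    | base =>
        intro hks
        have h1 : Finset.univ.filter (fun i : Fin s => (i : ℕ) < 1)
            = {(⟨0, by omega⟩ : Fin s)} := by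
          ext i
          simp only [Finset.mem_filter, Finset.mem_univ, true_and, Finset.mem_singleton,
            Fin.ext_iff]
          omega
        have h2 : (B 1).card = d + 1 := by
          rw [hB]
          simp only [h1, Finset.sum_singleton]
          exact (hA _).1
        rw [h2]
        push_cast
        have h4 : ((1:ℝ)/(8*(d:ℝ)))^d ≤ 1 := by
          apply pow_le_one₀ (by positivity)
          rw [div_le_one (by positivity)]
          linarith
        linarith
    | succ k hk1 IH =>
        intro hk1s
        push_cast
        have hks : k < s := by omega
        have hIHk := IH (by omega)
        set i₀ : Fin s := ⟨k, hks⟩ with hi₀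
        set N : ℕ := (B k).card with hN
        have hNpos : 0 < N := Finset.card_pos.2 (hBne k)
        have hmono : (N:ℕ) ≤ (B (k+1)).card := by
          rw [hstep k hks]
          exact Finset.card_le_card_add_left (hAne i₀)
        have hcast1 : ((k+1:ℕ):ℝ) ≤ (p:ℝ) := by exact_mod_cast le_trans hk1s hsp
        by_cases hbig : p^d ≤ 8^d * N
        · -- already huge
          have h8 : ((p:ℝ)/8)^d ≤ (N:ℝ) := by
            rw [div_pow, div_le_iff₀ (by positivity)]
            calc ((p:ℝ))^d ≤ ((8:ℝ))^d * N := by exact_mod_cast hbig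
              _ = (N:ℝ) * 8^d := by ring
          have hfrac : ((k:ℝ)+1)/(8*(d:ℝ)) ≤ (p:ℝ)/8 := by
            rw [div_le_div_iff₀ (by positivity) (by norm_num : (0:ℝ) < 8)]
            push_cast at hcast1
            nlinarith
          calc (((k:ℝ)+1)/(8*(d:ℝ)))^d ≤ ((p:ℝ)/8)^d := pow_le_pow_left₀ (by positivity) hfrac d
            _ ≤ (N:ℝ) := h8
            _ ≤ ((B (k+1)).card : ℝ) := by exact_mod_cast hmono
        · push_neg at hbig
          by_cases hsm : k + 1 ≤ 8*d
          · -- trivial regime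
            have h1 : ((k:ℝ)+1)/(8*(d:ℝ)) ≤ 1 := by
              rw [div_le_one (by positivity)]
              have h2 : ((k:ℝ)+1) ≤ 8*(d:ℝ) := by exact_mod_cast hsm
              linarith
            calc (((k:ℝ)+1)/(8*(d:ℝ)))^d ≤ 1 := pow_le_one₀ (by positivity) h1
              _ ≤ (N:ℝ) := by exact_mod_cast hNpos
              _ ≤ ((B (k+1)).card : ℝ) := by exact_mod_cast hmono
          · -- main growth regime
            have hk8 : 8*d ≤ k := by omega
            set y : ℝ := (k:ℝ)/(8*d) with hy
            have hy1 : 1 ≤ y := by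
              rw [hy, le_div_iff₀ (by positivity)]
              calc (1:ℝ) * (8*d) = ((8*d:ℕ):ℝ) := by push_cast; ring
                _ ≤ (k:ℝ) := by exact_mod_cast hk8
            have hy0 : 0 < y := by linarith
            set t : ℕ := ⌈(3/4) * y^(d-1)⌉₊ with ht
            have ht1 : 1 ≤ t := Nat.ceil_pos.2 (by positivity)
            -- arithmetic condition
            have harith : (N + p*(t-1))^d < p^d * N^(d-1) := by
              set z : ℝ := max (8*(N:ℝ)/p) (y^(d-1)) with hz
              have hz1 : (1:ℝ) ≤ z := le_trans (one_le_pow₀ hy1) (le_max_right _ _)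
              have hzd : z^d ≤ (N:ℝ)^(d-1) := by
                have hmax : z^d = max ((8*(N:ℝ)/p)^d) ((y^(d-1))^d) := by
                  rw [hz]
                  rcases le_total (8*(N:ℝ)/p) (y^(d-1)) with h | h
                  · rw [max_eq_right h, max_eq_right (pow_le_pow_left₀ (by positivity) h d)]
                  · rw [max_eq_left h, max_eq_left (pow_le_pow_left₀ (by positivity) h d)]
                rw [hmax, max_le_iff]
                constructor
                · -- (8N/p)^d ≤ N^{d-1}
                  rw [div_pow, div_le_iff₀ (by positivity)]
                  have hNd : (8*(N:ℝ))^d = 8^d * N^(d-1) * N := by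
                    rw [mul_pow, mul_assoc]
                    congr 1
                    rw [← pow_succ, Nat.sub_add_cancel hd]
                  rw [hNd]
                  have h8N : (8:ℝ)^d * N < (p:ℝ)^d := by exact_mod_cast hbig
                  calc (8:ℝ)^d * N^(d-1) * N = ((8:ℝ)^d * N) * N^(d-1) := by ring
                    _ ≤ (p:ℝ)^d * N^(d-1) := by
                        apply mul_le_mul_of_nonneg_right h8N.le (by positivity)
                    _ = (N:ℝ)^(d-1) * (p:ℝ)^d := by ring
                · -- (y^{d-1})^d ≤ N^{d-1}
                  rw [← pow_mul, mul_comm (d-1) d, pow_mul]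
                  exact pow_le_pow_left₀ (by positivity) hIHk (d-1)
              -- bound the base
              have hbase : ((N + p*(t-1) : ℕ) : ℝ) < (7/8) * (p * z) := by
                have hcast : ((N + p*(t-1) : ℕ) : ℝ) = (N:ℝ) + p * ((t:ℝ) - 1) := by
                  push_cast [ht1]
                  ring
                rw [hcast]
                have hb1 : (N:ℝ) ≤ p * z / 8 := by
                  have := le_max_left (8*(N:ℝ)/p) (y^(d-1))
                  rw [← hz] at this
                  rw [div_le_iff₀ (by positivity)] at this
                  rw [le_div_iff₀ (by norm_num : (0:ℝ) < 8)]
                  linarith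
                have hb2 : (t:ℝ) - 1 < (3/4) * y^(d-1) := by
                  have := Nat.ceil_lt_add_one (by positivity : (0:ℝ) ≤ (3/4) * y^(d-1))
                  rw [← ht] at this
                  linarith
                have hb3 : (3/4) * y^(d-1) ≤ (3/4) * z := by
                  apply mul_le_mul_of_nonneg_left (le_max_right _ _) (by norm_num)
                nlinarith [hp0, hz1]
              -- raise to power d
              have hpow : ((N + p*(t-1) : ℕ) : ℝ)^d < ((p:ℝ)^d * (N:ℝ)^(d-1)) := by
                have h7 : ((7:ℝ)/8)^d < 1 := by
                  apply pow_lt_one₀ (by norm_num) (by norm_num)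
                  omega
                have hNd1 : (1:ℝ) ≤ (N:ℝ)^(d-1) := one_le_pow₀ (by exact_mod_cast hNpos)
                calc ((N + p*(t-1) : ℕ) : ℝ)^d ≤ ((7/8) * (p * z))^d := by
                      apply pow_le_pow_left₀ (by positivity) hbase.le
                  _ = (7/8)^d * ((p:ℝ)^d * z^d) := by rw [mul_pow, mul_pow]
                  _ ≤ (7/8)^d * ((p:ℝ)^d * (N:ℝ)^(d-1)) := by
                      apply mul_le_mul_of_nonneg_left ?_ (by positivity)
                      exact mul_le_mul_of_nonneg_left hzd (by positivity)
                  _ < 1 * ((p:ℝ)^d * (N:ℝ)^(d-1)) := by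
                      apply mul_lt_mul_of_pos_right h7
                      positivity
                  _ = (p:ℝ)^d * (N:ℝ)^(d-1) := one_mul _
              exact_mod_cast hpow
            -- apply growth
            have hgrow := grow hd (B k) (A i₀) (hBne k) (hA i₀).1 (hA i₀).2 t harith
            have hcard : N + t ≤ (B (k+1)).card := by
              rw [hstep k hks, add_comm (A i₀) (B k)]
              exact hgrow
            -- final arithmetic
            have hfin : (((k:ℝ)+1)/(8*(d:ℝ)))^d ≤ (N:ℝ) + t := by
              have hrw : ((k:ℝ)+1)/(8*(d:ℝ)) = y + 1/(8*(d:ℝ)) := by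
                rw [hy, ← add_div]
              rw [hrw]
              calc (y + 1/(8*d))^d ≤ y^d + (3/4)*y^(d-1) := key_ineq d hd y hy1
                _ ≤ (N:ℝ) + (t:ℝ) := by
                    have := Nat.le_ceil ((3/4) * y^(d-1))
                    rw [← ht] at this
                    exact add_le_add hIHk this
            calc (((k:ℝ)+1)/(8*(d:ℝ)))^d ≤ (N:ℝ) + t := hfin
              _ ≤ ((B (k+1)).card : ℝ) := by exact_mod_cast hcard
  -- conclude
  have huniv : Finset.univ.filter (fun i : Fin s => (i : ℕ) < s) = Finset.univ := by
    ext i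
    simp [i.isLt]
  have hfinal : B s = ∑ i, A i := by simp only [hB, huniv]
  have := main s hs le_rfl
  rw [hfinal] at this
  exact_mod_cast this
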